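/- For all real a > 0 and b > 0, ∫_0^∞ e^{−a t} · J_1(b t) · t^{−1} dt = (√(b² + a²) − a)/b, where J_1(y) = ∑_{m=0}^∞ (−1)^m/(m!·Γ(m+2))·(y/2)^{2m+1}. -/

import Mathlib

open Real MeasureTheory Filter Topology intervalIntegral

/-- The Bessel function of the first kind of order 1, defined by its series. -/
noncomputable def besselJ1 (y : ℝ) : ℝ :=
  ∑' m : ℕ, (-1) ^ m / (m.factorial * Real.Gamma (m + 2)) * (y / 2) ^ (2 * m + 1)

lemma prod_odd_even (m : ℕ) : ∏ i ∈ Finset.range m, ((2*(i:ℝ)+1)/(2*i+2))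
    = (2*m).factorial / ((4:ℝ)^m * (m.factorial)^2) := by
  induction m with
  | zero => simp
  | succ k ih =>
    rw [Finset.prod_range_succ, ih]
    have h1 : ((2*(k+1)).factorial : ℝ) = (2*k+2) * ((2*k+1) * (2*k).factorial) := by
      have : 2*(k+1) = (2*k+1) + 1 := by ring
      rw [this]
      push_cast [Nat.factorial_succ]
      ring
    have h2 : ((k+1).factorial : ℝ) = (k+1) * k.factorial := by
      push_cast [Nat.factorial_succ]; ring
    rw [h1, h2]
    have hk : (k.factorial : ℝ) ≠ 0 := Nat.cast_ne_zero.2 k.factorial_ne_zero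
    field_simp
    push_cast
    ring

lemma cospow_even (m : ℕ) : ∫ x in (0:ℝ)..π, Real.cos x ^ (2*m)
    = π * ∏ i ∈ Finset.range m, ((2*(i:ℝ)+1)/(2*i+2)) := by
  induction m with
  | zero => simp
  | succ k ih =>
    have h : 2*(k+1) = 2*k + 2 := by ring
    rw [h, integral_cos_pow, ih, Finset.prod_range_succ]
    simp [Real.sin_pi]
    push_cast
    ring

lemma cospow_sinsq (m : ℕ) : ∫ x in (0:ℝ)..π, Real.cos x ^ (2*m) * Real.sin x ^ 2
    = π * (2*m).factorial / ((4:ℝ)^m * (m.factorial)^2 * (2*m+2)) := by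
  have h : ∀ x : ℝ, Real.cos x ^ (2*m) * Real.sin x ^ 2
      = Real.cos x ^ (2*m) - Real.cos x ^ (2*(m+1)) := by
    intro x
    have := Real.sin_sq_add_cos_sq x
    have h2 : Real.sin x ^ 2 = 1 - Real.cos x ^ 2 := by linarith
    rw [h2]; ring
  rw [intervalIntegral.integral_congr (fun x _ => h x)]
  rw [intervalIntegral.integral_sub
    ((by fun_prop : Continuous (fun x => Real.cos x ^ (2*m))).intervalIntegrable _ _)
    ((by fun_prop : Continuous (fun x => Real.cos x ^ (2*(m+1)))).intervalIntegrable _ _)]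
  rw [cospow_even, cospow_even, Finset.prod_range_succ, prod_odd_even]
  have hm : ((m.factorial : ℝ)) ≠ 0 := Nat.cast_ne_zero.2 m.factorial_ne_zero
  have h4 : ((4:ℝ))^m ≠ 0 := by positivity
  field_simp
  ring

lemma poisson (y : ℝ) : besselJ1 y
    = y / π * ∫ θ in (0:ℝ)..π, Real.cos (y * Real.cos θ) * Real.sin θ ^ 2 := by
  set F : ℕ → ℝ → ℝ := fun n θ =>
    ((-1)^n * y^(2*n) / (2*n).factorial) * (Real.cos θ ^ (2*n) * Real.sin θ ^ 2) with hF
  have hFcont : ∀ n, Continuous (F n) := by intro n; fun_prop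
  have hFint : ∀ n, IntegrableOn (F n) (Set.Ioc 0 π) := fun n =>
    (hFcont n).integrableOn_Ioc
  have hFbound : ∀ n θ, ‖F n θ‖ ≤ |y|^(2*n) / (2*n).factorial := by
    intro n θ
    rw [hF]
    simp only [norm_mul, norm_div, norm_pow, norm_neg, norm_one, one_pow, one_mul,
      Real.norm_eq_abs]
    rw [Nat.abs_cast]
    have h1 : |Real.cos θ| ^ (2*n) ≤ 1 := pow_le_one₀ (abs_nonneg _) (Real.abs_cos_le_one θ)
    have h2 : |Real.sin θ| ^ 2 ≤ 1 := pow_le_one₀ (abs_nonneg _) (Real.abs_sin_le_one θ)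
    have h3 : |Real.cos θ| ^ (2*n) * |Real.sin θ| ^ 2 ≤ 1 := by
      calc |Real.cos θ| ^ (2*n) * |Real.sin θ| ^ 2 ≤ 1 * 1 := by
            apply mul_le_mul h1 h2 (by positivity) zero_le_one
        _ = 1 := by ring
    calc |y| ^ (2*n) / ((2*n).factorial : ℝ) * (|Real.cos θ| ^ (2*n) * |Real.sin θ| ^ 2)
        ≤ |y| ^ (2*n) / ((2*n).factorial : ℝ) * 1 := by
          apply mul_le_mul_of_nonneg_left h3 (by positivity)
      _ = |y| ^ (2*n) / ((2*n).factorial : ℝ) := by ring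
  have hsum2 : Summable (fun n : ℕ => π * (|y|^(2*n) / (2*n).factorial)) := by
    apply Summable.mul_left
    exact (Real.summable_pow_div_factorial |y|).comp_injective
      (fun p q h => by omega)
  have hsum : Summable (fun n : ℕ => ∫ θ in Set.Ioc (0:ℝ) π, ‖F n θ‖) := by
    apply Summable.of_nonneg_of_le (fun n => integral_nonneg (fun θ => norm_nonneg _))
      _ hsum2
    intro n
    calc (∫ θ in Set.Ioc (0:ℝ) π, ‖F n θ‖)
        ≤ ∫ θ in Set.Ioc (0:ℝ) π, (|y|^(2*n) / (2*n).factorial) := by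
          apply setIntegral_mono_on (hFint n).norm (integrableOn_const (hs := measure_Ioc_lt_top.ne))
            measurableSet_Ioc
          intro θ _; exact hFbound n θ
      _ = π * (|y|^(2*n) / (2*n).factorial) := by
          rw [setIntegral_const]
          simp [Real.volume_Ioc, ENNReal.toReal_ofReal Real.pi_pos.le, Real.pi_pos.le]
  have key : (∫ θ in (0:ℝ)..π, Real.cos (y * Real.cos θ) * Real.sin θ ^ 2)
      = ∑' n : ℕ, ∫ θ in Set.Ioc (0:ℝ) π, F n θ := by
    rw [intervalIntegral.integral_of_le Real.pi_pos.le]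
    rw [show (fun θ => Real.cos (y * Real.cos θ) * Real.sin θ ^ 2) = fun θ => ∑' n, F n θ from ?_]
    · exact (MeasureTheory.integral_tsum_of_summable_integral_norm hFint hsum).symm
    · funext θ
      rw [Real.cos_eq_tsum, ← tsum_mul_right]
      apply tsum_congr
      intro n
      rw [hF]
      simp only [mul_pow]
      ring
  have hterm : ∀ n : ℕ, (∫ θ in Set.Ioc (0:ℝ) π, F n θ)
      = ((-1)^n * y^(2*n) / (2*n).factorial) *
        (π * (2*n).factorial / ((4:ℝ)^n * (n.factorial)^2 * (2*n+2))) := by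
    intro n
    rw [hF]
    rw [MeasureTheory.integral_const_mul]
    rw [← intervalIntegral.integral_of_le Real.pi_pos.le, cospow_sinsq]
  rw [key]
  simp_rw [hterm]
  rw [← tsum_mul_left]
  apply tsum_congr
  intro n
  have hGamma : Real.Gamma ((n:ℝ) + 2) = (n+1).factorial := by
    have : ((n:ℝ) + 2) = ((n+1 : ℕ) : ℝ) + 1 := by push_cast; ring
    rw [this, Real.Gamma_nat_eq_factorial]
  rw [hGamma]
  have h4 : ((4:ℝ))^n = 2^(2*n) := by rw [(by norm_num : (4:ℝ) = 2^2), ← pow_mul]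
  have hfac2 : (((2*n).factorial : ℝ)) ≠ 0 := Nat.cast_ne_zero.2 (Nat.factorial_ne_zero _)
  have hfacn : ((n.factorial : ℝ)) ≠ 0 := Nat.cast_ne_zero.2 (Nat.factorial_ne_zero _)
  have hfacn1 : (((n+1).factorial : ℝ)) ≠ 0 := Nat.cast_ne_zero.2 (Nat.factorial_ne_zero _)
  have hfs : (((n+1).factorial : ℝ)) = (n+1) * n.factorial := by
    push_cast [Nat.factorial_succ]; ring
  rw [hfs, h4]
  have hpi : (π : ℝ) ≠ 0 := Real.pi_ne_zero
  field_simp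
  have h2' : ((1:ℝ)/2)^(n*2) * 2^(n*2) = 1 := by rw [← mul_pow]; norm_num
  linear_combination (y * y^(n*2)) * h2'

lemma laplace_cos (a c : ℝ) (ha : 0 < a) :
    ∫ t in Set.Ioi (0:ℝ), Real.exp (-a*t) * Real.cos (c*t) = a / (a^2 + c^2) := by
  have hK : a^2 + c^2 ≠ 0 := by positivity
  set G : ℝ → ℝ := fun t =>
    Real.exp (-a*t) * (c * Real.sin (c*t) - a * Real.cos (c*t)) / (a^2 + c^2) with hG
  have hderiv : ∀ t ∈ Set.Ici (0:ℝ), HasDerivAt G (Real.exp (-a*t) * Real.cos (c*t)) t := by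
    intro t _
    have h1 : HasDerivAt (fun t : ℝ => Real.exp (-a*t)) (-a * Real.exp (-a*t)) t := by
      have := (Real.hasDerivAt_exp (-a*t)).comp t ((hasDerivAt_id t).const_mul (-a))
      simpa [Function.comp_def, mul_comm] using this
    have h2 : HasDerivAt (fun t : ℝ => Real.sin (c*t)) (c * Real.cos (c*t)) t := by
      have := (Real.hasDerivAt_sin (c*t)).comp t ((hasDerivAt_id t).const_mul c)
      simpa [Function.comp_def, mul_comm] using this
    have h3 : HasDerivAt (fun t : ℝ => Real.cos (c*t)) (-(c * Real.sin (c*t))) t := by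
      have := (Real.hasDerivAt_cos (c*t)).comp t ((hasDerivAt_id t).const_mul c)
      simpa [Function.comp_def, mul_comm] using this
    have h4 : HasDerivAt (fun t : ℝ => c * Real.sin (c*t) - a * Real.cos (c*t))
        (c * (c * Real.cos (c*t)) - a * (-(c * Real.sin (c*t)))) t :=
      ((h2.const_mul c).sub (h3.const_mul a))
    have h5 := (h1.mul h4).div_const (a^2 + c^2)
    refine h5.congr_deriv (Eq.symm ?_)
    rw [eq_div_iff hK]
    ring
  have hint : IntegrableOn (fun t => Real.exp (-a*t) * Real.cos (c*t)) (Set.Ioi 0) := by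
    apply Integrable.mono' (exp_neg_integrableOn_Ioi 0 ha)
    · exact (Continuous.aestronglyMeasurable (by fun_prop)).restrict
    · filter_upwards with t
      rw [norm_mul, Real.norm_eq_abs, Real.norm_eq_abs, Real.abs_exp]
      calc Real.exp (-a*t) * |Real.cos (c*t)| ≤ Real.exp (-a*t) * 1 :=
            mul_le_mul_of_nonneg_left (Real.abs_cos_le_one _) (Real.exp_nonneg _)
        _ = Real.exp (-a*t) := by ring
  have htend : Tendsto G atTop (𝓝 0) := by
    apply squeeze_zero_norm (a := fun t => Real.exp (-a*t) * ((|c| + a) / (a^2+c^2)))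
    · intro t
      rw [hG]
      simp only [Real.norm_eq_abs, abs_div, abs_mul, Real.abs_exp]
      rw [abs_of_pos (by positivity : (0:ℝ) < a^2 + c^2)]
      rw [div_le_iff₀ (by positivity)]
      have : |c * Real.sin (c*t) - a * Real.cos (c*t)| ≤ |c| + a := by
        calc |c * Real.sin (c*t) - a * Real.cos (c*t)|
            ≤ |c * Real.sin (c*t)| + |a * Real.cos (c*t)| := abs_sub _ _
          _ ≤ |c| * 1 + |a| * 1 := by
              gcongr
              · rw [abs_mul]; exact mul_le_mul_of_nonneg_left (Real.abs_sin_le_one _) (abs_nonneg c)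
              · rw [abs_mul]; exact mul_le_mul_of_nonneg_left (Real.abs_cos_le_one _) (abs_nonneg a)
          _ = |c| + a := by rw [abs_of_pos ha]; ring
      calc Real.exp (-a*t) * |c * Real.sin (c*t) - a * Real.cos (c*t)|
          ≤ Real.exp (-a*t) * (|c| + a) :=
            mul_le_mul_of_nonneg_left this (Real.exp_nonneg _)
        _ = Real.exp (-a*t) * ((|c| + a) / (a^2+c^2)) * (a^2 + c^2) := by field_simp
    · have h0 : Tendsto (fun t : ℝ => Real.exp (-a*t)) atTop (𝓝 0) := by
        simp_rw [neg_mul]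
        exact Real.tendsto_exp_neg_atTop_nhds_zero.comp
          (tendsto_id.const_mul_atTop ha)
      simpa using h0.mul_const ((|c| + a) / (a^2+c^2))
  rw [MeasureTheory.integral_Ioi_of_hasDerivAt_of_tendsto' hderiv hint htend]
  rw [hG]
  simp
  field_simp

lemma trig_int (a b : ℝ) (ha : 0 < a) (hb : 0 < b) :
    ∫ θ in (0:ℝ)..π, Real.sin θ ^ 2 * (a / (a^2 + (b * Real.cos θ)^2))
      = π * (Real.sqrt (a^2+b^2) - a) / b^2 := by
  set s := Real.sqrt (a^2+b^2) with hs
  have hs0 : 0 < s := Real.sqrt_pos.2 (by positivity)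
  have hs2 : s^2 = a^2+b^2 := Real.sq_sqrt (by positivity)
  set f : ℝ → ℝ := fun θ => Real.sin θ ^ 2 * (a / (a^2 + (b * Real.cos θ)^2)) with hf
  have hD : ∀ θ : ℝ, 0 < a^2 + (b * Real.cos θ)^2 := fun θ => by positivity
  have hfc : Continuous f := by
    apply Continuous.mul (by fun_prop)
    exact continuous_const.div (by fun_prop) (fun θ => (hD θ).ne')
  set H1 : ℝ → ℝ := fun θ =>
    s/b^2 * Real.arctan (a * Real.sin θ / (s * Real.cos θ)) - a*θ/b^2 with hH1
  set H2 : ℝ → ℝ := fun θ =>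
    s/b^2 * (Real.arctan (a * Real.sin θ / (s * Real.cos θ)) + π) - a*θ/b^2 with hH2
  set H3 : ℝ → ℝ := fun θ =>
    s/b^2 * (π/2 - Real.arctan (s * Real.cos θ / (a * Real.sin θ))) - a*θ/b^2 with hH3
  have pyth : ∀ θ : ℝ, Real.sin θ ^ 2 = 1 - Real.cos θ ^ 2 := fun θ => by
    have := Real.sin_sq_add_cos_sq θ; linarith
  -- derivative of H1 (and H2) where cos θ ≠ 0
  have key1 : ∀ θ : ℝ, Real.cos θ ≠ 0 → HasDerivAt H1 (f θ) θ := by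
    intro θ hc
    have hnum : HasDerivAt (fun θ => a * Real.sin θ) (a * Real.cos θ) θ :=
      (Real.hasDerivAt_sin θ).const_mul a
    have hden : HasDerivAt (fun θ => s * Real.cos θ) (s * -Real.sin θ) θ :=
      (Real.hasDerivAt_cos θ).const_mul s
    have hdiv := hnum.div hden (by
      exact mul_ne_zero hs0.ne' hc)
    have harct := hdiv.arctan
    have hlin : HasDerivAt (fun θ : ℝ => a*θ/b^2) (a/b^2) θ := by
      simpa using ((hasDerivAt_id θ).const_mul a).div_const (b^2)
    have := (harct.const_mul (s/b^2)).sub hlin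
    refine this.congr_deriv (Eq.symm ?_)
    have hnum1 : a * Real.cos θ * (s * Real.cos θ) - a * Real.sin θ * (s * -Real.sin θ)
        = a * s := by linear_combination (a*s) * (Real.sin_sq_add_cos_sq θ)
    have hsc : s * Real.cos θ ≠ 0 := mul_ne_zero hs0.ne' hc
    have e3 : 1 / (1 + (a * Real.sin θ / (s * Real.cos θ)) ^ 2) * ((a*s) / (s * Real.cos θ)^2)
        = a * s / ((s*Real.cos θ)^2 + a^2 * Real.sin θ^2) := by
      have h5 : (s*Real.cos θ)^2 + a^2*Real.sin θ^2 ≠ 0 := by positivity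
      field_simp
    have hden2' : (s*Real.cos θ)^2 + a^2*Real.sin θ^2 = a^2 + (b*Real.cos θ)^2 := by
      linear_combination (Real.cos θ^2) * hs2 + (a^2) * (pyth θ)
    simp only [hf, Pi.div_apply]
    rw [hnum1, e3, hden2']
    have hDne : (a^2 + (b*Real.cos θ)^2) ≠ 0 := (hD θ).ne'
    rw [show s / b^2 * (a * s / (a^2 + (b*Real.cos θ)^2))
        = a * s^2 / (b^2 * (a^2 + (b*Real.cos θ)^2)) by rw [div_mul_div_comm]; ring, hs2, pyth θ]
    field_simp
    ring
  have key2 : ∀ θ : ℝ, Real.cos θ ≠ 0 → HasDerivAt H2 (f θ) θ := by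
    intro θ hc
    have h := (key1 θ hc).add_const (s/b^2 * π)
    have e : H2 = fun x => H1 x + s/b^2 * π := by
      funext x
      rw [hH2, hH1]
      ring
    rw [e]; exact h
  have key3 : ∀ θ : ℝ, Real.sin θ ≠ 0 → HasDerivAt H3 (f θ) θ := by
    intro θ hsin
    have hnum : HasDerivAt (fun θ => s * Real.cos θ) (s * -Real.sin θ) θ :=
      (Real.hasDerivAt_cos θ).const_mul s
    have hden : HasDerivAt (fun θ => a * Real.sin θ) (a * Real.cos θ) θ :=
      (Real.hasDerivAt_sin θ).const_mul a
    have hdiv := hnum.div hden (mul_ne_zero ha.ne' hsin)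
    have harct := hdiv.arctan
    have hlin : HasDerivAt (fun θ : ℝ => a*θ/b^2) (a/b^2) θ := by
      simpa using ((hasDerivAt_id θ).const_mul a).div_const (b^2)
    have hc2 : HasDerivAt (fun θ : ℝ => π/2 - Real.arctan (s * Real.cos θ / (a * Real.sin θ)))
        (-(1 / (1 + (s * Real.cos θ / (a * Real.sin θ))^2) *
          ((s * -Real.sin θ * (a * Real.sin θ) - s * Real.cos θ * (a * Real.cos θ)) /
            (a * Real.sin θ)^2))) θ := (harct.const_sub (π/2))
    have := (hc2.const_mul (s/b^2)).sub hlin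
    refine this.congr_deriv (Eq.symm ?_)
    have hnum1 : s * -Real.sin θ * (a * Real.sin θ) - s * Real.cos θ * (a * Real.cos θ)
        = -(a * s) := by linear_combination (-(a*s)) * (Real.sin_sq_add_cos_sq θ)
    have has : a * Real.sin θ ≠ 0 := mul_ne_zero ha.ne' hsin
    rw [hnum1]
    have e3 : s / b ^ 2 * -(1 / (1 + (s * Real.cos θ / (a * Real.sin θ)) ^ 2) *
          (-(a*s) / (a * Real.sin θ)^2))
        = s / b ^ 2 * (a * s / ((a*Real.sin θ)^2 + (s*Real.cos θ)^2)) := by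
      have h5 : (a*Real.sin θ)^2 + (s*Real.cos θ)^2 ≠ 0 := by positivity
      field_simp
    rw [e3]
    have hden2' : (a*Real.sin θ)^2 + (s*Real.cos θ)^2 = a^2 + (b*Real.cos θ)^2 := by
      linear_combination (Real.cos θ^2) * hs2 + (a^2) * (pyth θ)
    rw [hden2']
    simp only [hf]
    have hDne : (a^2 + (b*Real.cos θ)^2) ≠ 0 := (hD θ).ne'
    rw [show s / b^2 * (a * s / (a^2 + (b*Real.cos θ)^2))
        = a * s^2 / (b^2 * (a^2 + (b*Real.cos θ)^2)) by rw [div_mul_div_comm]; ring, hs2, pyth θ]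
    field_simp
    ring
  -- matching of antiderivatives
  have pi_pos := Real.pi_pos
  have mA : H3 (π/4) = H1 (π/4) := by
    have hsp : 0 < Real.sin (π/4) := by
      apply Real.sin_pos_of_pos_of_lt_pi <;> linarith
    have hcp : 0 < Real.cos (π/4) := by
      apply Real.cos_pos_of_mem_Ioo
      constructor <;> [linarith; linarith]
    have hu : 0 < a * Real.sin (π/4) / (s * Real.cos (π/4)) := by positivity
    simp only [hH3, hH1]
    rw [show s * Real.cos (π/4) / (a * Real.sin (π/4))
        = (a * Real.sin (π/4) / (s * Real.cos (π/4)))⁻¹ by rw [inv_div]]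
    rw [Real.arctan_inv_of_pos hu]
    ring
  have mB : H3 (3*π/4) = H2 (3*π/4) := by
    have hsp : 0 < Real.sin (3*π/4) := by
      apply Real.sin_pos_of_pos_of_lt_pi <;> linarith
    have hcn : Real.cos (3*π/4) < 0 := by
      apply Real.cos_neg_of_pi_div_two_lt_of_lt <;> linarith
    have hu : a * Real.sin (3*π/4) / (s * Real.cos (3*π/4)) < 0 := by
      apply div_neg_of_pos_of_neg (by positivity)
      exact mul_neg_of_pos_of_neg hs0 hcn
    simp only [hH3, hH2]
    rw [show s * Real.cos (3*π/4) / (a * Real.sin (3*π/4))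
        = (a * Real.sin (3*π/4) / (s * Real.cos (3*π/4)))⁻¹ by rw [inv_div]]
    rw [Real.arctan_inv_of_neg hu]
    ring
  -- the three pieces
  have i1 : ∫ θ in (0:ℝ)..(π/4), f θ = H1 (π/4) - H1 0 := by
    apply intervalIntegral.integral_eq_sub_of_hasDerivAt
    · intro x hx
      rw [Set.uIcc_of_le (by linarith : (0:ℝ) ≤ π/4)] at hx
      apply key1
      have h1 : -(π/2) < x := by linarith [hx.1]
      have h2 : x < π/2 := by linarith [hx.2]
      exact (Real.cos_pos_of_mem_Ioo ⟨h1, h2⟩).ne'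
    · exact hfc.intervalIntegrable _ _
  have i2 : ∫ θ in (π/4:ℝ)..(3*π/4), f θ = H3 (3*π/4) - H3 (π/4) := by
    apply intervalIntegral.integral_eq_sub_of_hasDerivAt
    · intro x hx
      rw [Set.uIcc_of_le (by linarith : (π/4:ℝ) ≤ 3*π/4)] at hx
      apply key3
      have h1 : 0 < x := by linarith [hx.1]
      have h2 : x < π := by linarith [hx.2]
      exact (Real.sin_pos_of_pos_of_lt_pi h1 h2).ne'
    · exact hfc.intervalIntegrable _ _
  have i3 : ∫ θ in (3*π/4:ℝ)..π, f θ = H2 π - H2 (3*π/4) := by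
    apply intervalIntegral.integral_eq_sub_of_hasDerivAt
    · intro x hx
      rw [Set.uIcc_of_le (by linarith : (3*π/4:ℝ) ≤ π)] at hx
      apply key2
      have h1 : π/2 < x := by linarith [hx.1]
      have h2 : x < π + π/2 := by linarith [hx.2]
      exact (Real.cos_neg_of_pi_div_two_lt_of_lt h1 h2).ne
    · exact hfc.intervalIntegrable _ _
  have hsplit : ∫ θ in (0:ℝ)..π, f θ
      = (∫ θ in (0:ℝ)..(π/4), f θ) + (∫ θ in (π/4:ℝ)..(3*π/4), f θ)
        + (∫ θ in (3*π/4:ℝ)..π, f θ) := by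
    rw [intervalIntegral.integral_add_adjacent_intervals (hfc.intervalIntegrable _ _)
      (hfc.intervalIntegrable _ _)]
    rw [intervalIntegral.integral_add_adjacent_intervals (hfc.intervalIntegrable _ _)
      (hfc.intervalIntegrable _ _)]
  have hH10 : H1 0 = 0 := by
    simp only [hH1]
    simp
  have hH2pi : H2 π = π * (s - a) / b^2 := by
    simp only [hH2]
    simp [Real.sin_pi]
    ring
  calc ∫ θ in (0:ℝ)..π, Real.sin θ ^ 2 * (a / (a^2 + (b * Real.cos θ)^2))
      = (∫ θ in (0:ℝ)..(π/4), f θ) + (∫ θ in (π/4:ℝ)..(3*π/4), f θ)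
        + (∫ θ in (3*π/4:ℝ)..π, f θ) := hsplit
    _ = π * (s - a) / b^2 := by
        rw [i1, i2, i3, mA, mB, hH10, hH2pi]
        ring

theorem laplace_besselJ1 (a b : ℝ) (ha : 0 < a) (hb : 0 < b) :
    ∫ t in Set.Ioi (0:ℝ), Real.exp (-a * t) * besselJ1 (b * t) * t⁻¹
      = (Real.sqrt (b ^ 2 + a ^ 2) - a) / b := by
  have pi_pos := Real.pi_pos
  set g : ℝ → ℝ → ℝ := fun t θ =>
    Real.exp (-a*t) * Real.cos ((b * Real.cos θ) * t) * Real.sin θ ^ 2 with hg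
  have hpt : ∀ t ∈ Set.Ioi (0:ℝ), Real.exp (-a * t) * besselJ1 (b * t) * t⁻¹
      = b/π * ∫ θ in Set.Ioo (0:ℝ) π, g t θ := by
    intro t ht
    have ht0 : (0:ℝ) < t := ht
    have hJ := poisson (b * t)
    have hcongr : (∫ θ in (0:ℝ)..π, Real.cos ((b*t) * Real.cos θ) * Real.sin θ ^ 2)
        = ∫ θ in (0:ℝ)..π, Real.cos ((b * Real.cos θ) * t) * Real.sin θ ^ 2 := by
      apply intervalIntegral.integral_congr
      intro θ _
      ring_nf
    rw [hJ, hcongr]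
    rw [intervalIntegral.integral_of_le pi_pos.le, MeasureTheory.integral_Ioc_eq_integral_Ioo]
    rw [hg]
    simp only []
    rw [show (∫ θ in Set.Ioo (0:ℝ) π,
        Real.exp (-a*t) * Real.cos ((b * Real.cos θ) * t) * Real.sin θ ^ 2)
      = Real.exp (-a*t) * ∫ θ in Set.Ioo (0:ℝ) π,
        Real.cos ((b * Real.cos θ) * t) * Real.sin θ ^ 2 from by
      rw [← MeasureTheory.integral_const_mul]
      apply setIntegral_congr_fun measurableSet_Ioo
      intro θ _
      ring]
    field_simp
  rw [setIntegral_congr_fun measurableSet_Ioi hpt]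
  rw [MeasureTheory.integral_const_mul]
  have hInt : Integrable (Function.uncurry g)
      ((volume.restrict (Set.Ioi 0)).prod (volume.restrict (Set.Ioo 0 π))) := by
    have hbound : Integrable (fun p : ℝ × ℝ => Real.exp (-a * p.1) * 1)
        ((volume.restrict (Set.Ioi 0)).prod (volume.restrict (Set.Ioo 0 π))) := by
      exact Integrable.mul_prod (exp_neg_integrableOn_Ioi 0 ha)
        (integrableOn_const (hs := measure_Ioo_lt_top.ne))
    apply hbound.mono'
    · apply Continuous.aestronglyMeasurable
      rw [hg]; unfold Function.uncurry; fun_prop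
    · filter_upwards with p
      rw [hg]
      simp only [Function.uncurry]
      rw [norm_mul, norm_mul, Real.norm_eq_abs, Real.norm_eq_abs, Real.norm_eq_abs,
        Real.abs_exp]
      have h1 : |Real.cos (b * Real.cos p.2 * p.1)| ≤ 1 := Real.abs_cos_le_one _
      have h2 : |Real.sin p.2 ^ 2| ≤ 1 := by
        rw [abs_of_nonneg (sq_nonneg _), sq_abs (Real.sin p.2) |>.symm]
        exact pow_le_one₀ (abs_nonneg _) (Real.abs_sin_le_one _)
      calc Real.exp (-a * p.1) * |Real.cos (b * Real.cos p.2 * p.1)| * |Real.sin p.2 ^ 2|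
          ≤ Real.exp (-a * p.1) * 1 * 1 := by
            apply mul_le_mul _ h2 (abs_nonneg _) (by positivity)
            exact mul_le_mul_of_nonneg_left h1 (Real.exp_nonneg _)
        _ = Real.exp (-a * p.1) * 1 := by ring
  rw [MeasureTheory.integral_integral_swap hInt]
  have hinner : ∀ θ ∈ Set.Ioo (0:ℝ) π, (∫ t in Set.Ioi (0:ℝ), g t θ)
      = Real.sin θ ^ 2 * (a / (a^2 + (b*Real.cos θ)^2)) := by
    intro θ _
    rw [hg]
    simp only []
    rw [MeasureTheory.integral_mul_const, laplace_cos a (b*Real.cos θ) ha]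
    ring
  rw [setIntegral_congr_fun measurableSet_Ioo hinner]
  rw [← MeasureTheory.integral_Ioc_eq_integral_Ioo,
    ← intervalIntegral.integral_of_le pi_pos.le, trig_int a b ha hb]
  rw [show a^2 + b^2 = b^2 + a^2 by ring]
  field_simp
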